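/- Let X be the n×n generic matrix, Y the generic n×1 column, and g_i = Σ_{j=1}^n x_{ij} y_j for 1 ≤ i ≤ n. Then g_1, ..., g_n form a regular sequence in the polynomial ring R = K[x_{ij}, y_j : 1 ≤ i,j ≤ n]. -/

import Mathlib

open MvPolynomial Matrix

section Seq
variable {A : Type*} [CommRing A]


def pid (f : ℕ → A) (t : ℕ) : Ideal A := Ideal.span (Set.range fun s : Fin t => f s)

def RegSeq (f : ℕ → A) (k : ℕ) : Prop :=
  ∀ t < k, ∀ c : A, c * f t ∈ pid f t → c ∈ pid f t

lemma mem_pid_iff {f : ℕ → A} {t : ℕ} {a : A} :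
    a ∈ pid f t ↔ ∃ c : Fin t → A, ∑ s : Fin t, c s * f s = a :=
  Ideal.mem_span_range_iff_exists_fun

lemma koszul (f : ℕ → A) (k : ℕ) (hreg : RegSeq f k) (c : ℕ → A)
    (hc : ∑ i ∈ Finset.range k, c i * f i = 0) :
    ∃ B : ℕ → ℕ → A, (∀ i j, B i j = - B j i) ∧ (∀ i, B i i = 0) ∧
      ∀ i < k, c i = ∑ j ∈ Finset.range k, B i j * f j := by
  induction k generalizing c with
  | zero => exact ⟨0, by simp, by simp, by simp⟩
  | succ k ih =>
    rw [Finset.sum_range_succ] at hc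
    have hck : c k * f k ∈ pid f k := by
      rw [mem_pid_iff]
      refine ⟨fun s => - c s, ?_⟩
      have : ∑ s : Fin k, (fun s : Fin k => - c s) s * f s
          = - ∑ i ∈ Finset.range k, c i * f i := by
        rw [Fin.sum_univ_eq_sum_range (fun i => - c i * f i), ← Finset.sum_neg_distrib]
        simp [neg_mul]
      rw [this]
      linear_combination - hc
    have hckmem : c k ∈ pid f k := hreg k (Nat.lt_succ_self k) _ hck
    obtain ⟨e, he⟩ := mem_pid_iff.mp hckmem
    set e' : ℕ → A := fun i => if h : i < k then e ⟨i, h⟩ else 0 with he'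
    have he'sum : ∑ i ∈ Finset.range k, e' i * f i = c k := by
      rw [← he, ← Fin.sum_univ_eq_sum_range (fun i => e' i * f i)]
      apply Finset.sum_congr rfl
      intro s _
      simp [he', s.2]
    have hreg' : RegSeq f k := fun t ht => hreg t (ht.trans (Nat.lt_succ_self k))
    have hc' : ∑ i ∈ Finset.range k, (c i + e' i * f k) * f i = 0 := by
      have : ∑ i ∈ Finset.range k, (c i + e' i * f k) * f i
          = (∑ i ∈ Finset.range k, c i * f i) + (∑ i ∈ Finset.range k, e' i * f i) * f k := by
        rw [Finset.sum_mul, ← Finset.sum_add_distrib]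
        apply Finset.sum_congr rfl; intros; ring
      rw [this, he'sum]
      linear_combination hc
    obtain ⟨B', hB'a, hB'0, hB'r⟩ := ih hreg' (fun i => c i + e' i * f k) hc'
    classical
    set D : ℕ → ℕ → A := fun i j => if i < k ∧ j < k then B' i j
      else if i < k ∧ j = k then -(e' i) else if i = k ∧ j < k then e' j else 0 with hD
    refine ⟨D, ?_, ?_, ?_⟩
    · intro i j
      simp only [hD]
      split_ifs
      all_goals first | rfl | exact hB'a i j | exact (neg_neg _).symm | exact neg_zero.symm | (exfalso; omega)
    · intro i
      simp only [hD]
      split_ifs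
      all_goals first | exact hB'0 i | rfl | (exfalso; omega)
    · intro i hi
      rw [Finset.sum_range_succ]
      by_cases hik : i < k
      · have h1 : ∀ j ∈ Finset.range k, D i j * f j = B' i j * f j := by
          intro j hj
          rw [Finset.mem_range] at hj
          simp only [hD]
          rw [if_pos ⟨hik, hj⟩]
        rw [Finset.sum_congr rfl h1]
        have h2 : D i k = -(e' i) := by
          simp [hD, hik, Nat.lt_irrefl]
        rw [h2, ← hB'r i hik]
        ring
      · have hik' : i = k := by omega
        have h1 : ∀ j ∈ Finset.range k, D i j * f j = e' j * f j := by
          intro j hj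
          rw [Finset.mem_range] at hj
          simp only [hD]
          simp [hD, hik', hj, Nat.lt_irrefl]
        have h2 : D i k = 0 := by
          simp [hD, hik', Nat.lt_irrefl]
        rw [Finset.sum_congr rfl h1, h2, he'sum, hik']
        ring

lemma pid_congr {f h : ℕ → A} {t : ℕ} (H : ∀ s < t, f s = h s) : pid f t = pid h t := by
  unfold pid
  congr 1
  ext a
  constructor <;> rintro ⟨s, rfl⟩
  · exact ⟨s, (H s s.2).symm⟩
  · exact ⟨s, H s s.2⟩


lemma antisym_sum_zero (B : ℕ → ℕ → A) (hB : ∀ i j, B i j = - B j i)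
    (hB0 : ∀ i, B i i = 0) (u : ℕ → A) (t : ℕ) :
    ∑ i ∈ Finset.range t, ∑ j ∈ Finset.range t, B i j * u i * u j = 0 := by
  induction t with
  | zero => simp
  | succ t ih =>
    rw [Finset.sum_range_succ]
    conv_lhs => rw [show (fun i => ∑ j ∈ Finset.range (t+1), B i j * u i * u j)
      = fun i => (∑ j ∈ Finset.range t, B i j * u i * u j) + B i t * u i * u t from
        funext fun i => Finset.sum_range_succ _ t]
    rw [Finset.sum_add_distrib, ih, zero_add, Finset.sum_range_succ, hB0]
    simp only [zero_mul, add_zero]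
    rw [← Finset.sum_add_distrib]
    have h1 : ∀ i ∈ Finset.range t, B i t * u i * u t + B t i * u t * u i = 0 := by
      intro i _
      rw [hB i t]; ring
    rw [Finset.sum_congr rfl h1]
    simp

end Seq


section Core
variable {S : Type*} [CommRing S]

lemma coeff_zero_of_deg_lt {f : MvPolynomial ℕ S} {μ : ℕ →₀ ℕ} {j : ℕ}
    (h : f.totalDegree < μ j) : coeff μ f = 0 := by
  by_contra hne
  have h1 : μ ∈ f.support := mem_support_iff.mpr hne
  have h2 := le_totalDegree h1
  have h3 : μ j ≤ μ.sum fun _ e => e := by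
    by_cases hj : j ∈ μ.support
    · exact Finset.single_le_sum (fun i _ => Nat.zero_le _) hj
    · simp [Finsupp.notMem_support_iff.mp hj]
  omega

lemma core_nzd (J : Ideal S) (m : ℕ) (hm : 0 < m) (u : ℕ → S)
    (hu : ∀ c : S, c * u (m-1) ∈ J → c ∈ J)
    (f : MvPolynomial ℕ S)
    (hf : f * (∑ j ∈ Finset.range m, C (u j) * X j) ∈
      J.map (MvPolynomial.C : S →+* MvPolynomial ℕ S)) :
    f ∈ J.map (MvPolynomial.C : S →+* MvPolynomial ℕ S) := by
  classical
  rw [mem_map_C_iff] at hf ⊢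
  set q := m - 1 with hq
  have key : ∀ ν : ℕ →₀ ℕ, coeff ν (f * ∑ j ∈ Finset.range m, C (u j) * X j)
      = ∑ j ∈ Finset.range m,
        (if j ∈ ν.support then u j * coeff (ν - Finsupp.single j 1) f else 0) := by
    intro ν
    rw [Finset.mul_sum, coeff_sum]
    apply Finset.sum_congr rfl
    intro j _
    have h1 : f * (C (u j) * X j) = (C (u j) * f) * X j := by ring
    rw [h1, coeff_mul_X', coeff_C_mul]
  have claim : ∀ t : ℕ, ∀ μ : ℕ →₀ ℕ, f.totalDegree + 1 ≤ μ q + t → coeff μ f ∈ J := by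
    intro t
    induction t with
    | zero =>
      intro μ hμ
      rw [coeff_zero_of_deg_lt (j := q) (by omega)]
      exact J.zero_mem
    | succ t ih =>
      intro μ hμ
      set ν := μ + Finsupp.single q 1 with hν
      have hνJ : coeff ν (f * ∑ j ∈ Finset.range m, C (u j) * X j) ∈ J := hf ν
      rw [key] at hνJ
      have hqmem : q ∈ Finset.range m := by
        rw [Finset.mem_range]; omega
      rw [← Finset.add_sum_erase _ _ hqmem] at hνJ
      have hνq : ν q = μ q + 1 := by simp [hν]
      have hterm : (if q ∈ ν.support then u q * coeff (ν - Finsupp.single q 1) f else 0)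
          = u q * coeff μ f := by
        rw [if_pos (Finsupp.mem_support_iff.mpr (by omega))]
        congr 1
        rw [hν, add_tsub_cancel_right]
      have hrest : ∀ j ∈ (Finset.range m).erase q,
          (if j ∈ ν.support then u j * coeff (ν - Finsupp.single j 1) f else 0) ∈ J := by
        intro j hj
        have hjq : j ≠ q := Finset.ne_of_mem_erase hj
        split_ifs with hjs
        · apply Ideal.mul_mem_left
          apply ih
          have h5 := Finsupp.tsub_apply ν (Finsupp.single j 1) q
          have h6 : Finsupp.single j 1 q = 0 := Finsupp.single_eq_of_ne' hjq
          omega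
        · exact J.zero_mem
      have hmain : u q * coeff μ f ∈ J := by
        rw [← hterm]
        have h2 := Ideal.sum_mem J hrest
        have := J.sub_mem hνJ h2
        simpa using this
      exact hu _ (by rwa [mul_comm] at hmain)
  intro μ
  exact claim (f.totalDegree + 1) μ (by omega)

/-- the fresh-variable version, in `Polynomial C` -/
lemma fresh_nzd (J : Ideal S) (f : Polynomial S)
    (hf : f * Polynomial.X ∈ J.map (Polynomial.C : S →+* Polynomial S)) :
    f ∈ J.map (Polynomial.C : S →+* Polynomial S) := by
  rw [Ideal.mem_map_C_iff] at hf ⊢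
  intro n
  have := hf (n + 1)
  rwa [Polynomial.coeff_mul_X] at this

end Core


abbrev Vt : Type := (ℕ × ℕ) ⊕ ℕ

def eRow (r : ℕ) : Vt ≃ ℕ ⊕ Vt where
  toFun v := match v with
    | .inl (i, j) => if i = r then .inl j else .inr (.inl (if i < r then i else i - 1, j))
    | .inr j => .inr (.inr j)
  invFun s := match s with
    | .inl j => .inl (r, j)
    | .inr (.inl (i, j)) => .inl (if i < r then i else i + 1, j)
    | .inr (.inr j) => .inr j
  left_inv v := by
    rcases v with ⟨i, j⟩ | j <;> dsimp only <;> try split_ifs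
    all_goals try dsimp only
    all_goals try split_ifs
    all_goals simp_all
    all_goals omega
  right_inv s := by
    rcases s with j | (⟨i, j⟩ | j) <;> dsimp only <;> try split_ifs
    all_goals try dsimp only
    all_goals try split_ifs
    all_goals simp_all
    all_goals omega

def eY (t : ℕ) : Vt ≃ Option Vt where
  toFun v := match v with
    | .inl p => some (.inl p)
    | .inr j => if j = t then none else some (.inr (if j < t then j else j - 1))
  invFun s := match s with
    | none => .inr t
    | some (.inl p) => .inl p
    | some (.inr j) => .inr (if j < t then j else j + 1)
  left_inv v := by
    rcases v with p | j <;> dsimp only <;> try split_ifs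
    all_goals try dsimp only
    all_goals try split_ifs
    all_goals simp_all
    all_goals omega
  right_inv s := by
    rcases s with _ | (p | j) <;> dsimp only <;> try split_ifs
    all_goals try dsimp only
    all_goals try split_ifs
    all_goals simp_all
    all_goals omega

section Iso

variable {K : Type*} [Field K]

noncomputable def xv (K : Type*) [Field K] (i j : ℕ) : MvPolynomial Vt K := X (.inl (i, j))
noncomputable def yv (K : Type*) [Field K] (j : ℕ) : MvPolynomial Vt K := X (.inr j)
noncomputable def gv (K : Type*) [Field K] (m i : ℕ) : MvPolynomial Vt K :=
  ∑ j ∈ Finset.range m, xv K i j * yv K j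

noncomputable def psiRow (K : Type*) [Field K] (r : ℕ) :
    MvPolynomial Vt K ≃ₐ[K] MvPolynomial ℕ (MvPolynomial Vt K) :=
  (renameEquiv K (eRow r)).trans (sumAlgEquiv K ℕ Vt)

lemma psiRow_x_row (r j : ℕ) : psiRow K r (xv K r j) = X j := by
  simp [psiRow, xv, eRow, sumToIter_Xl]

lemma psiRow_x_lt {i : ℕ} (r : ℕ) (h : i < r) (j : ℕ) :
    psiRow K r (xv K i j) = C (xv K i j) := by
  simp [psiRow, xv, eRow, h, Nat.ne_of_lt h, sumToIter_Xr]

lemma psiRow_y (r j : ℕ) : psiRow K r (yv K j) = C (yv K j) := by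
  simp [psiRow, yv, eRow, sumToIter_Xr]

lemma psiRow_g_lt {i : ℕ} (r : ℕ) (h : i < r) (m : ℕ) :
    psiRow K r (gv K m i) = C (gv K m i) := by
  rw [gv, _root_.map_sum]
  have h1 : ∀ j ∈ Finset.range m, psiRow K r (xv K i j * yv K j) = C (xv K i j * yv K j) := by
    intro j _
    rw [_root_.map_mul, psiRow_x_lt r h, psiRow_y, ← _root_.map_mul]
  rw [Finset.sum_congr rfl h1, ← _root_.map_sum]

lemma psiRow_g_row (r m : ℕ) :
    psiRow K r (gv K m r) = ∑ j ∈ Finset.range m, C (yv K j) * X j := by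
  rw [gv, _root_.map_sum]
  apply Finset.sum_congr rfl
  intro j _
  rw [_root_.map_mul, psiRow_x_row, psiRow_y]
  ring

noncomputable def psiY (K : Type*) [Field K] (t : ℕ) :
    MvPolynomial Vt K ≃ₐ[K] Polynomial (MvPolynomial Vt K) :=
  (renameEquiv K (eY t)).trans (optionEquivLeft K Vt)

lemma psiY_y_self (t : ℕ) : psiY K t (yv K t) = Polynomial.X := by
  simp [psiY, yv, eY, optionEquivLeft_X_none]

lemma psiY_x (t i j : ℕ) : psiY K t (xv K i j) = Polynomial.C (xv K i j) := by
  simp [psiY, xv, eY, optionEquivLeft_X_some]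

lemma psiY_y_lt {j t : ℕ} (h : j < t) : psiY K t (yv K j) = Polynomial.C (yv K j) := by
  simp [psiY, yv, eY, Nat.ne_of_lt h, h, optionEquivLeft_X_some]

lemma psiY_g {m t : ℕ} (h : m ≤ t) (i : ℕ) :
    psiY K t (gv K m i) = Polynomial.C (gv K m i) := by
  rw [gv, _root_.map_sum]
  have h1 : ∀ j ∈ Finset.range m, psiY K t (xv K i j * yv K j)
      = Polynomial.C (xv K i j * yv K j) := by
    intro j hj
    rw [Finset.mem_range] at hj
    rw [_root_.map_mul, psiY_x, psiY_y_lt (by omega), ← _root_.map_mul]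
  rw [Finset.sum_congr rfl h1, ← _root_.map_sum]

end Iso

section Transport

lemma mem_ideal_map_equiv_iff {A B : Type*} [CommRing A] [CommRing B]
    (e : A ≃+* B) (I : Ideal A) (x : A) : e x ∈ I.map (e : A →+* B) ↔ x ∈ I := by
  constructor
  · intro h
    have h2 := Ideal.mem_map_of_mem (e.symm : B →+* A) h
    rw [Ideal.map_map] at h2
    simpa using h2
  · exact fun h => Ideal.mem_map_of_mem _ h

lemma map_pid {A B : Type*} [CommRing A] [CommRing B] (φ : A →+* B) (f : ℕ → A) (t : ℕ) :
    (pid f t).map φ = pid (fun i => φ (f i)) t := by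
  unfold pid
  rw [Ideal.map_span]
  congr 1
  rw [← Set.range_comp]
  rfl

end Transport

section Main

variable {K : Type*} [Field K]

lemma mem_map_algEquiv_iff {A B : Type*} [CommRing A] [CommRing B]
    [Algebra K A] [Algebra K B] (e : A ≃ₐ[K] B) (I : Ideal A) (x : A) :
    e x ∈ I.map (e.toRingEquiv : A →+* B) ↔ x ∈ I :=
  mem_ideal_map_equiv_iff e.toRingEquiv I x

lemma hexp (m i : ℕ) : gv K (m+1) i = gv K m i + xv K i m * yv K m := by
  rw [gv, Finset.sum_range_succ, gv]

/-- a fresh variable `y t`, `t ≥ m`, is a nonzerodivisor mod the ideal of the `gv K m i` -/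
lemma fresh_var_reg (m k t : ℕ) (hmt : m ≤ t) (c : MvPolynomial Vt K)
    (hc : c * yv K t ∈ pid (fun i => gv K m i) k) : c ∈ pid (fun i => gv K m i) k := by
  set J := pid (fun i => gv K m i) k with hJ
  set ψ := psiY K t with hψ
  have hmapJ : J.map (ψ.toRingEquiv : MvPolynomial Vt K →+* Polynomial (MvPolynomial Vt K))
      = J.map (Polynomial.C : MvPolynomial Vt K →+* Polynomial (MvPolynomial Vt K)) := by
    rw [hJ, map_pid, map_pid]
    apply pid_congr
    intro s _
    exact psiY_g hmt s
  have h1 : ψ (c * yv K t) ∈ J.map (ψ.toRingEquiv :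
      MvPolynomial Vt K →+* Polynomial (MvPolynomial Vt K)) :=
    (mem_map_algEquiv_iff ψ J _).mpr hc
  rw [hmapJ] at h1
  rw [_root_.map_mul, psiY_y_self] at h1
  have h2 := fresh_nzd J (ψ c) h1
  rw [← hmapJ] at h2
  exact (mem_map_algEquiv_iff ψ J c).mp h2

/-- `y m` is a nonzerodivisor mod the ideal of `gv K (m+1) i`, `i < k`, provided `k ≤ m` -/
lemma z_reg (m k : ℕ) (hk : k ≤ m) (hPm : RegSeq (fun i => gv K m i) m)
    (c : MvPolynomial Vt K)
    (hc : c * yv K m ∈ pid (fun i => gv K (m+1) i) k) :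
    c ∈ pid (fun i => gv K (m+1) i) k := by
  classical
  obtain ⟨d, hd⟩ := mem_pid_iff.mp hc
  set G : ℕ → MvPolynomial Vt K := fun i => gv K (m+1) i with hG
  set f' : ℕ → MvPolynomial Vt K := fun i => if i = k then yv K m else gv K m i with hf'
  set d' : ℕ → MvPolynomial Vt K := fun i => if h : i < k then d ⟨i, h⟩ else 0 with hd'def
  set cc : ℕ → MvPolynomial Vt K := fun i =>
    if i = k then (∑ i ∈ Finset.range k, d' i * xv K i m) - c else d' i with hcc
  -- the extended sequence (g^m_0, ..., g^m_{k-1}, y_m) is RegSeq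
  have hpidf' : ∀ t ≤ k, pid f' t = pid (fun i => gv K m i) t := by
    intro t ht
    apply pid_congr
    intro s hs
    simp [hf', (show s ≠ k by omega)]
  have hreg' : RegSeq f' (k+1) := by
    intro t ht c' hc'
    rw [hpidf' t (by omega)] at hc' ⊢
    by_cases htk : t < k
    · have hft : f' t = gv K m t := by simp [hf', (show t ≠ k by omega)]
      rw [hft] at hc'
      exact hPm t (by omega) c' hc'
    · have htke : t = k := by omega
      have hft : f' t = yv K m := by simp [hf', htke]
      rw [hft] at hc'
      subst htke
      exact fresh_var_reg m t m (le_refl m) c' hc'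
  -- the syzygy
  have hd'G : ∑ i ∈ Finset.range k, d' i * G i = c * yv K m := by
    rw [← Fin.sum_univ_eq_sum_range (fun i => d' i * G i) k, ← hd]
    apply Finset.sum_congr rfl
    intro s _
    congr 1
    simp [hd'def, s.2]
  have hsyz : ∑ i ∈ Finset.range (k+1), cc i * f' i = 0 := by
    rw [Finset.sum_range_succ]
    have h1 : ∀ i ∈ Finset.range k, cc i * f' i = d' i * gv K m i := by
      intro i hi
      rw [Finset.mem_range] at hi
      simp [hcc, hf', (show i ≠ k by omega)]
    rw [Finset.sum_congr rfl h1]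
    have hcck : cc k = (∑ i ∈ Finset.range k, d' i * xv K i m) - c := by
      simp [hcc]
    have hfk : f' k = yv K m := by simp [hf']
    rw [hcck, hfk]
    have h2 : ∑ i ∈ Finset.range k, d' i * gv K m i
        = c * yv K m - ∑ i ∈ Finset.range k, d' i * (xv K i m * yv K m) := by
      have h3 : ∀ i ∈ Finset.range k, d' i * G i
          = d' i * gv K m i + d' i * (xv K i m * yv K m) := by
        intro i _
        rw [hG]
        simp only []
        rw [hexp m i]
        ring
      rw [Finset.sum_congr rfl h3, Finset.sum_add_distrib] at hd'G
      linear_combination hd'G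
    rw [h2]
    have h5 : (∑ i ∈ Finset.range k, d' i * xv K i m) * yv K m
        = ∑ i ∈ Finset.range k, d' i * (xv K i m * yv K m) := by
      rw [Finset.sum_mul]
      exact Finset.sum_congr rfl (by intros; ring)
    linear_combination h5
  -- koszul
  obtain ⟨B, hBa, hB0, hBr⟩ := koszul f' (k+1) hreg' cc hsyz
  have hdi : ∀ i, i < k → d' i = ∑ j ∈ Finset.range k, B i j * gv K m j + B i k * yv K m := by
    intro i hik
    have h := hBr i (by omega)
    rw [Finset.sum_range_succ] at h
    have hcci : cc i = d' i := by simp [hcc, (show i ≠ k by omega)]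
    have hfk : f' k = yv K m := by simp [hf']
    have hfj : ∀ j ∈ Finset.range k, B i j * f' j = B i j * gv K m j := by
      intro j hj
      rw [Finset.mem_range] at hj
      congr 1
      simp [hf', (show j ≠ k by omega)]
    rw [hcci, hfk, Finset.sum_congr rfl hfj] at h
    exact h
  -- the main computation
  set w : MvPolynomial Vt K := ∑ i ∈ Finset.range k,
    (B i k - ∑ j ∈ Finset.range k, B i j * xv K j m) * G i with hw
  have hbar : ∀ j, gv K m j = G j - xv K j m * yv K m := by
    intro j
    rw [hG]
    simp only []
    rw [hexp m j]
    ring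
  have key : c * yv K m = yv K m * w := by
    rw [← hd'G]
    have step1 : ∀ i ∈ Finset.range k, d' i * G i
        = (∑ j ∈ Finset.range k, B i j * gv K m j * G i) + B i k * yv K m * G i := by
      intro i hi
      rw [Finset.mem_range] at hi
      rw [hdi i hi, add_mul, Finset.sum_mul]
    have step2 : ∀ i ∈ Finset.range k, ∑ j ∈ Finset.range k, B i j * gv K m j * G i
        = (∑ j ∈ Finset.range k, B i j * G i * G j)
          - ∑ j ∈ Finset.range k, yv K m * (B i j * xv K j m * G i) := by
      intro i _
      rw [← Finset.sum_sub_distrib]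
      apply Finset.sum_congr rfl
      intro j _
      rw [hbar j]
      ring
    have step3 : ∀ i ∈ Finset.range k, yv K m
          * ((B i k - ∑ j ∈ Finset.range k, B i j * xv K j m) * G i)
        = B i k * yv K m * G i
          - ∑ j ∈ Finset.range k, yv K m * (B i j * xv K j m * G i) := by
      intro i _
      calc yv K m * ((B i k - ∑ j ∈ Finset.range k, B i j * xv K j m) * G i)
          = B i k * yv K m * G i
            - yv K m * ((∑ j ∈ Finset.range k, B i j * xv K j m) * G i) := by ring
        _ = B i k * yv K m * G i
            - yv K m * (∑ j ∈ Finset.range k, B i j * xv K j m * G i) := by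
              rw [Finset.sum_mul]
        _ = B i k * yv K m * G i
            - ∑ j ∈ Finset.range k, yv K m * (B i j * xv K j m * G i) := by
              rw [Finset.mul_sum]
    calc ∑ i ∈ Finset.range k, d' i * G i
        = ∑ i ∈ Finset.range k, ((∑ j ∈ Finset.range k, B i j * gv K m j * G i)
            + B i k * yv K m * G i) := Finset.sum_congr rfl step1
      _ = (∑ i ∈ Finset.range k, ∑ j ∈ Finset.range k, B i j * gv K m j * G i)
            + ∑ i ∈ Finset.range k, B i k * yv K m * G i := Finset.sum_add_distrib
      _ = ((∑ i ∈ Finset.range k, ∑ j ∈ Finset.range k, B i j * G i * G j)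
            - ∑ i ∈ Finset.range k, ∑ j ∈ Finset.range k, yv K m * (B i j * xv K j m * G i))
            + ∑ i ∈ Finset.range k, B i k * yv K m * G i := by
          rw [Finset.sum_congr rfl step2, Finset.sum_sub_distrib]
      _ = (0 - ∑ i ∈ Finset.range k, ∑ j ∈ Finset.range k, yv K m * (B i j * xv K j m * G i))
            + ∑ i ∈ Finset.range k, B i k * yv K m * G i := by
          rw [antisym_sum_zero B hBa hB0 G k]
      _ = yv K m * w := by
          rw [hw, Finset.mul_sum, Finset.sum_congr rfl step3, Finset.sum_sub_distrib]
          ring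
  have hyne : (yv K m : MvPolynomial Vt K) ≠ 0 := X_ne_zero _
  have hcw : c = w := by
    apply mul_left_cancel₀ hyne
    linear_combination key
  rw [hcw, hw]
  rw [← Fin.sum_univ_eq_sum_range
    (fun i => (B i k - ∑ j ∈ Finset.range k, B i j * xv K j m) * G i) k]
  exact mem_pid_iff.mpr ⟨_, rfl⟩

/-- the grand induction: the `gv K m i`, `i < m`, form a (membership-form) regular sequence -/
theorem main_reg : ∀ m : ℕ, RegSeq (fun i => gv K m i) m := by
  intro m
  induction m with
  | zero => intro t ht; omega
  | succ m ih =>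
    intro t ht c hc
    set ψ := psiRow K t with hψ
    set J : Ideal (MvPolynomial Vt K) := pid (fun i => gv K (m+1) i) t with hJ
    have hmapJ : J.map (ψ.toRingEquiv :
          MvPolynomial Vt K →+* MvPolynomial ℕ (MvPolynomial Vt K))
        = J.map (C : MvPolynomial Vt K →+* MvPolynomial ℕ (MvPolynomial Vt K)) := by
      rw [hJ, map_pid, map_pid]
      apply pid_congr
      intro s hs
      exact psiRow_g_lt t hs (m+1)
    have h1 : ψ c * (∑ j ∈ Finset.range (m+1), C (yv K j) * X j)
        ∈ J.map (C : MvPolynomial Vt K →+* MvPolynomial ℕ (MvPolynomial Vt K)) := by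
      rw [← psiRow_g_row t (m+1), ← hψ, ← _root_.map_mul, ← hmapJ]
      exact (mem_map_algEquiv_iff ψ J _).mpr hc
    have hu : ∀ c' : MvPolynomial Vt K, c' * yv K ((m+1)-1) ∈ J → c' ∈ J := by
      intro c' hc'
      simp only [Nat.add_sub_cancel] at hc'
      exact z_reg m t (by omega) ih c' hc'
    have h2 := core_nzd J (m+1) (by omega) (fun j => yv K j) hu (ψ c) h1
    rw [← hmapJ] at h2
    exact (mem_map_algEquiv_iff ψ J c).mp h2

end Main

section Final

variable {K : Type*} [Field K]

lemma isSMulRegular_quot_of_mem_imp {A : Type*} [CommRing A] (I : Ideal A) (a : A)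
    (h : ∀ x, x * a ∈ I → x ∈ I) :
    IsSMulRegular (A ⧸ (I • ⊤ : Submodule A A)) a := by
  have hI : (I • ⊤ : Submodule A A) = I := by
    rw [Ideal.smul_eq_mul, Ideal.mul_top]
  intro x y hxy
  obtain ⟨u, rfl⟩ := Submodule.Quotient.mk_surjective _ x
  obtain ⟨v, rfl⟩ := Submodule.Quotient.mk_surjective _ y
  have h2 : a • u - a • v ∈ (I • ⊤ : Submodule A A) := by
    rw [← Submodule.Quotient.eq, Submodule.Quotient.mk_smul, Submodule.Quotient.mk_smul]
    exact hxy
  rw [hI] at h2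
  have h3 : (u - v) * a ∈ I := by
    have he : a • u - a • v = (u - v) * a := by
      simp only [smul_eq_mul]
      ring
    rwa [he] at h2
  rw [Submodule.Quotient.eq, hI]
  exact h _ h3

lemma bridge_quot {A : Type*} [CommRing A] (I : Ideal A) (a : A)
    (h : ∀ x, x * a ∈ I → x ∈ I) {I' : Ideal A} {a' : A} (hI : I' = I) (ha : a' = a) :
    IsSMulRegular (A ⧸ (I' • ⊤ : Submodule A A)) a' := by
  rcases hI
  rcases ha
  exact isSMulRegular_quot_of_mem_imp I a h

theorem generic_XY_entries_regular_sequence'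
    (n : ℕ)
    (g : Fin n → MvPolynomial ((Fin n × Fin n) ⊕ Fin n) K)
    (hg : ∀ i, g i = ∑ j, MvPolynomial.X (Sum.inl (i, j)) * MvPolynomial.X (Sum.inr j)) :
    RingTheory.Sequence.IsWeaklyRegular (MvPolynomial ((Fin n × Fin n) ⊕ Fin n) K)
      (List.ofFn g) := by
  classical
  set ι : ((Fin n × Fin n) ⊕ Fin n) → Vt :=
    Sum.elim (fun p => Sum.inl (p.1.1, p.2.1)) (fun j => Sum.inr j.1) with hι
  set φ : MvPolynomial ((Fin n × Fin n) ⊕ Fin n) K →ₐ[K] MvPolynomial Vt K :=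
    rename ι with hφ
  set ρ : Vt → MvPolynomial ((Fin n × Fin n) ⊕ Fin n) K := fun v => match v with
    | .inl (i, j) => if h : i < n ∧ j < n then MvPolynomial.X (.inl (⟨i, h.1⟩, ⟨j, h.2⟩)) else 0
    | .inr j => if h : j < n then MvPolynomial.X (.inr ⟨j, h⟩) else 0 with hρ
  set π : MvPolynomial Vt K →ₐ[K] MvPolynomial ((Fin n × Fin n) ⊕ Fin n) K :=
    aeval ρ with hπ
  have hπφ : ∀ p, π (φ p) = p := by
    have hcomp : π.comp φ = AlgHom.id K _ := by
      apply MvPolynomial.algHom_ext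
      intro v
      rcases v with ⟨i, j⟩ | j
      · simp only [AlgHom.coe_comp, Function.comp_apply, hφ, rename_X, hι, Sum.elim_inl, hπ,
          aeval_X, hρ, AlgHom.coe_id, id_eq]
        rw [dif_pos ⟨i.2, j.2⟩]
      · simp only [AlgHom.coe_comp, Function.comp_apply, hφ, rename_X, hι, Sum.elim_inr, hπ,
          aeval_X, hρ, AlgHom.coe_id, id_eq]
        rw [dif_pos j.2]
    intro p
    calc π (φ p) = (π.comp φ) p := rfl
      _ = p := by rw [hcomp]; rfl
  have hφg : ∀ t : Fin n, φ (g t) = gv K n t.val := by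
    intro t
    rw [hg, _root_.map_sum, gv, ← Fin.sum_univ_eq_sum_range (fun j => xv K t.val j * yv K j) n]
    apply Finset.sum_congr rfl
    intro j _
    rw [_root_.map_mul]
    simp [hφ, hι, xv, yv]
  have hcompRH : (π : MvPolynomial Vt K →+* MvPolynomial ((Fin n × Fin n) ⊕ Fin n) K).comp
      (φ : MvPolynomial ((Fin n × Fin n) ⊕ Fin n) K →+* MvPolynomial Vt K)
      = RingHom.id _ := RingHom.ext hπφ
  -- the transfer of regularity to the finite polynomial ring
  have transfer : ∀ (t : Fin n) (c : MvPolynomial ((Fin n × Fin n) ⊕ Fin n) K),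
      c * g t ∈ Ideal.span (Set.range fun s : Fin t.val => g (Fin.castLE t.isLt.le s)) →
      c ∈ Ideal.span (Set.range fun s : Fin t.val => g (Fin.castLE t.isLt.le s)) := by
    intro t c hcP
    set P : Ideal (MvPolynomial ((Fin n × Fin n) ⊕ Fin n) K) :=
      Ideal.span (Set.range fun s : Fin t.val => g (Fin.castLE t.isLt.le s)) with hP
    have hmapφ : P.map (φ : MvPolynomial ((Fin n × Fin n) ⊕ Fin n) K →+* MvPolynomial Vt K)
        = pid (fun s => gv K n s) t.val := by
      rw [hP, Ideal.map_span]
      unfold pid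
      congr 1
      rw [← Set.range_comp]
      apply congrArg Set.range
      funext s
      exact hφg _
    have h1 : φ c * gv K n t.val ∈ pid (fun s => gv K n s) t.val := by
      rw [← hφg t, ← _root_.map_mul, ← hmapφ]
      exact Ideal.mem_map_of_mem _ hcP
    have h2 := main_reg (K := K) n t.val t.isLt (φ c) h1
    rw [← hmapφ] at h2
    have h3 := Ideal.mem_map_of_mem
      (π : MvPolynomial Vt K →+* MvPolynomial ((Fin n × Fin n) ⊕ Fin n) K) h2
    rw [Ideal.map_map, hcompRH, Ideal.map_id] at h3
    have h4 : π (φ c) ∈ P := h3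
    rwa [hπφ c] at h4
  -- now establish weak regularity
  rw [RingTheory.Sequence.isWeaklyRegular_iff_Fin]
  intro i
  have hlen : (List.ofFn g).length = n := List.length_ofFn
  set t : Fin n := ⟨i.val, Nat.lt_of_lt_of_eq i.isLt hlen⟩ with ht
  have hel : (List.ofFn g)[i.val] = g t := by
    rw [List.getElem_ofFn]
  have hTake : Ideal.ofList ((List.ofFn g).take i.val)
      = Ideal.span (Set.range fun s : Fin t.val => g (Fin.castLE t.isLt.le s)) := by
    unfold Ideal.ofList
    congr 1
    ext a
    simp only [Set.mem_setOf_eq, Set.mem_range]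
    constructor
    · intro ha
      rw [List.mem_take_iff_getElem] at ha
      obtain ⟨j, hj, hja⟩ := ha
      have hj1 : j < t.val := by
        have h8 := Nat.lt_min.mp hj
        have htv : (t : ℕ) = (i : ℕ) := rfl
        omega
      rw [List.getElem_ofFn] at hja
      exact ⟨⟨j, hj1⟩, by rw [← hja]; exact congrArg g (Fin.ext rfl)⟩
    · rintro ⟨s, rfl⟩
      rw [List.mem_take_iff_getElem]
      have hsv : (s : ℕ) < (i : ℕ) := s.isLt
      have hi := i.isLt
      have hslen : s.val < (List.ofFn g).length := by omega
      have hs1 : s.val < min i.val (List.ofFn g).length := by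
        rw [Nat.lt_min]
        omega
      exact ⟨s.val, hs1, (List.getElem_ofFn hslen).trans (congrArg g (Fin.ext rfl))⟩
  exact bridge_quot _ _ (transfer t) hTake hel

end Final


/-- With `X` the generic `n×n` matrix and `Y` the generic column, the entries
`g i = ∑ j x i j * y j` of `X * Y` form a regular sequence in `R = K[x i j, y j]`. -/
theorem generic_XY_entries_regular_sequence
    {K : Type*} [Field K] (n : ℕ)
    (Xv : Fin n → Fin n → MvPolynomial ((Fin n × Fin n) ⊕ Fin n) K)
    (yv : Fin n → MvPolynomial ((Fin n × Fin n) ⊕ Fin n) K)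
    (hX : ∀ i j, Xv i j = MvPolynomial.X (Sum.inl (i, j)))
    (hy : ∀ j, yv j = MvPolynomial.X (Sum.inr j))
    (g : Fin n → MvPolynomial ((Fin n × Fin n) ⊕ Fin n) K)
    (hg : ∀ i, g i = ∑ j, Xv i j * yv j) :
    RingTheory.Sequence.IsWeaklyRegular (MvPolynomial ((Fin n × Fin n) ⊕ Fin n) K)
      (List.ofFn g) := by
  have hg' : ∀ i, g i = ∑ j, (MvPolynomial.X (Sum.inl (i, j)) : MvPolynomial ((Fin n × Fin n) ⊕ Fin n) K) * MvPolynomial.X (Sum.inr j) := by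
    intro i
    rw [hg i]
    apply Finset.sum_congr rfl
    intro j _
    rw [hX, hy]
  exact generic_XY_entries_regular_sequence' n g hg'
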